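/- Let d ≥ 1, γ > 0 and 0 < α < β be real numbers with √β − √α < γ. Then there exist a symmetric positive definite matrix Q ∈ ℝ^{2d×2d} and a constant κ > 0 such that for every symmetric matrix H ∈ ℝ^{d×d} with α·Id ≤ H ≤ β·Id in the Loewner order, and for every ξ ∈ ℝ^{2d}, one has ⟨ξ, J Q ξ⟩ ≤ −κ ⟨ξ, Q ξ⟩, where J ∈ ℝ^{2d×2d} is the block matrix with blocks J₁₁ = 0, J₁₂ = Id, J₂₁ = −H, J₂₂ = −γ·Id. -/

import Mathlib

open Matrix

noncomputable def LCkk (α B γ : ℝ) : ℝ := (γ^2*(2*(α+B)-γ^2) - (B-α)^2)/(8*(α+B)*γ)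
noncomputable def LCmm (α B γ κ : ℝ) : ℝ := (B-α)/(2*(γ-2*κ))
noncomputable def LCt (α B γ κ : ℝ) : ℝ := -γ/2 + LCmm α B γ κ
noncomputable def LCt' (α B γ κ : ℝ) : ℝ := -γ/2 - LCmm α B γ κ
noncomputable def LCl (α B γ κ : ℝ) : ℝ := 1/(2*(LCmm α B γ κ)*(α+B))
noncomputable def LCD (α B γ κ : ℝ) : ℝ :=
  (γ - κ) - LCl α B γ κ * (B*(LCt' α B γ κ)^2 - α*(LCt α B γ κ)^2)

lemma LCdot_self_nonneg {n : Type*} [Fintype n] (w : n → ℝ) : 0 ≤ w ⬝ᵥ w := by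
  unfold dotProduct
  exact Finset.sum_nonneg fun i _ => mul_self_nonneg (w i)

section facts
variable {α B γ : ℝ} (hγ : 0 < γ) (hα : 0 < α) (hαB : α < B)
  (hS : γ^2 ≤ α + B) (hg : 0 < γ^2*(2*(α+B)-γ^2) - (B-α)^2)

include hγ hα hαB hg in
lemma LCkk_pos : 0 < LCkk α B γ := by
  have h1 : (0:ℝ) < α + B := by linarith
  exact div_pos hg (by nlinarith)

include hγ hα hαB in
lemma LCkk_le : LCkk α B γ ≤ γ/4 := by
  have h1 : (0:ℝ) < α + B := by linarith
  unfold LCkk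
  rw [div_le_iff₀ (by nlinarith)]
  nlinarith [sq_nonneg (B-α), sq_nonneg (γ^2), mul_pos h1 (mul_pos hγ hγ)]

include hγ hα hαB hg in
lemma LCgk_pos : 0 < γ - 2 * LCkk α B γ := by
  have := LCkk_le hγ hα hαB (γ := γ); linarith

include hγ hα hαB hg in
lemma LCmm_pos : 0 < LCmm α B γ (LCkk α B γ) := by
  unfold LCmm
  exact div_pos (by linarith) (by have := LCgk_pos hγ hα hαB hg; linarith)

include hγ hα hαB hg in
lemma LCl_pos : 0 < LCl α B γ (LCkk α B γ) := by
  unfold LCl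
  have h1 := LCmm_pos hγ hα hαB hg
  have h2 : (0:ℝ) < α + B := by linarith
  positivity

lemma LCD_alt {κ : ℝ} (h1 : (0:ℝ) < α + B) (h2 : 0 < γ - 2*κ) (h3 : B - α ≠ 0) :
    LCD α B γ κ = ((γ^2*(2*(α+B)-γ^2) - (B-α)^2)
      - 2*κ*(2*(α+B)-γ^2)*(2*γ-2*κ))/(4*(α+B)*(γ-2*κ)) := by
  have hk : γ - 2*κ ≠ 0 := h2.ne'
  have hk2 : γ - κ*2 ≠ 0 := by intro h; apply hk; linarith
  unfold LCD LCl LCt LCt' LCmm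
  field_simp
  ring

include hγ hα hαB hS hg in
lemma LCD_nonneg : 0 ≤ LCD α B γ (LCkk α B γ) := by
  have h1 : (0:ℝ) < α + B := by linarith
  have h2 := LCgk_pos hγ hα hαB hg
  have hk := LCkk_pos hγ hα hαB hg
  have hkle := LCkk_le hγ hα hαB (γ := γ)
  rw [LCD_alt h1 h2 (by linarith)]
  apply div_nonneg _ (by positivity)
  set κ := LCkk α B γ with hκ
  have hkey : 2*κ*(2*(α+B)-γ^2)*(2*γ-2*κ) ≤ 2*κ*(2*(α+B))*(2*γ) := by
    have e1 : 0 ≤ 2*(α+B)-γ^2 := by nlinarith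
    have e2 : 2*(α+B)-γ^2 ≤ 2*(α+B) := by nlinarith [sq_nonneg γ]
    have e3 : 0 ≤ 2*γ-2*κ := by linarith
    have e4 : 2*γ-2*κ ≤ 2*γ := by linarith
    have := mul_le_mul e2 e4 e3 (by positivity)
    nlinarith
  have heq : 2*κ*(2*(α+B))*(2*γ) = γ^2*(2*(α+B)-γ^2) - (B-α)^2 := by
    rw [hκ]; unfold LCkk; field_simp; ring
  linarith

end facts

set_option maxHeartbeats 2000000 in
lemma LC_key_identity (α B γ κ X P V hxx hxv hvv : ℝ)
    (hS0 : α + B ≠ 0) (hk : γ - 2*κ ≠ 0) (hBa : B - α ≠ 0) :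
    (-((-γ/(α+B))*X + (1 - γ*(-γ/(α+B)))*P - (2/(α+B))*hxv - (-γ/(α+B))*hvv - γ*V)
      - κ*((2/(α+B))*X + 2*(-γ/(α+B))*P + V))
    = LCl α B γ κ*((hxx + 2*LCt α B γ κ*hxv + (LCt α B γ κ)^2*hvv)
        - α*(X + 2*LCt α B γ κ*P + (LCt α B γ κ)^2*V))
      + LCl α B γ κ*(B*(X + 2*LCt' α B γ κ*P + (LCt' α B γ κ)^2*V)
        - (hxx + 2*LCt' α B γ κ*hxv + (LCt' α B γ κ)^2*hvv))
      + LCD α B γ κ*V := by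
  unfold LCD LCl LCt LCt' LCmm
  field_simp
  ring

set_option maxHeartbeats 3000000 in
lemma LC_aux (d : ℕ) (γ α B : ℝ)
    (hγ : 0 < γ) (hα : 0 < α) (hαB : α < B)
    (hS : γ^2 ≤ α + B) (hg : 0 < γ^2*(2*(α+B)-γ^2) - (B-α)^2) :
    ∃ (Q : Matrix (Fin d ⊕ Fin d) (Fin d ⊕ Fin d) ℝ) (κ : ℝ),
      Q.PosDef ∧ Q.IsSymm ∧ 0 < κ ∧
      ∀ H : Matrix (Fin d) (Fin d) ℝ, H.IsSymm →
        (∀ w : Fin d → ℝ, α*(w ⬝ᵥ w) ≤ w ⬝ᵥ (H *ᵥ w)) →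
        (∀ w : Fin d → ℝ, w ⬝ᵥ (H *ᵥ w) ≤ B*(w ⬝ᵥ w)) →
        ∀ ξ : Fin d ⊕ Fin d → ℝ,
          ξ ⬝ᵥ ((Matrix.fromBlocks (0 : Matrix (Fin d) (Fin d) ℝ)
              (1 : Matrix (Fin d) (Fin d) ℝ) (-H)
              (-(γ • (1 : Matrix (Fin d) (Fin d) ℝ))) * Q) *ᵥ ξ)
            ≤ -κ * (ξ ⬝ᵥ (Q *ᵥ ξ)) := by
  have hSpos : (0:ℝ) < α + B := by linarith
  set Q : Matrix (Fin d ⊕ Fin d) (Fin d ⊕ Fin d) ℝ :=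
    Matrix.fromBlocks ((2/(α+B)) • (1 : Matrix (Fin d) (Fin d) ℝ))
      ((-γ/(α+B)) • 1) ((-γ/(α+B)) • 1) 1 with hQ
  have hκpos := LCkk_pos hγ hα hαB hg
  have hgk := LCgk_pos hγ hα hαB hg
  have hlpos := LCl_pos hγ hα hαB hg
  have hDpos := LCD_nonneg hγ hα hαB hS hg
  -- symmetry of Q
  have hQsym : Q.IsSymm := by
    rw [hQ, Matrix.IsSymm, fromBlocks_transpose]
    simp [transpose_smul]
  -- quadratic form of Q
  have hQform : ∀ ξ : Fin d ⊕ Fin d → ℝ,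
      ξ ⬝ᵥ (Q *ᵥ ξ) = (2/(α+B))*((ξ ∘ Sum.inl) ⬝ᵥ (ξ ∘ Sum.inl))
        + 2*(-γ/(α+B))*((ξ ∘ Sum.inl) ⬝ᵥ (ξ ∘ Sum.inr))
        + ((ξ ∘ Sum.inr) ⬝ᵥ (ξ ∘ Sum.inr)) := by
    intro ξ
    set x : Fin d → ℝ := ξ ∘ Sum.inl with hx
    set v : Fin d → ℝ := ξ ∘ Sum.inr with hv
    have hξ : ξ = Sum.elim x v := by funext i; cases i <;> rfl
    have hQv : Q *ᵥ ξ = Sum.elim ((2/(α+B)) • x + (-γ/(α+B)) • v) ((-γ/(α+B)) • x + v) := by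
      rw [hQ, fromBlocks_mulVec]
      simp [smul_mulVec, one_mulVec]
      rfl
    rw [hQv]
    nth_rewrite 1 [hξ]
    rw [sumElim_dotProduct_sumElim]
    simp only [dotProduct_add, dotProduct_smul, smul_eq_mul, dotProduct_comm v x]
    ring
  -- positive definiteness
  have hQpd : Q.PosDef := by
    rw [posDef_iff_dotProduct_mulVec]
    constructor
    · rw [Matrix.IsHermitian, conjTranspose_eq_transpose_of_trivial]
      exact hQsym
    · intro ξ hξ0
      have hstar : star ξ = ξ := by
        funext i; simp
      rw [hstar, hQform ξ]
      set x : Fin d → ℝ := ξ ∘ Sum.inl with hx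
      set v : Fin d → ℝ := ξ ∘ Sum.inr with hv
      have hξ : ξ = Sum.elim x v := by funext i; cases i <;> rfl
      have hW : (x - γ • v) ⬝ᵥ (x - γ • v)
          = (x ⬝ᵥ x) - 2*γ*(x ⬝ᵥ v) + γ^2*(v ⬝ᵥ v) := by
        simp only [dotProduct_sub, sub_dotProduct, dotProduct_smul, smul_dotProduct,
          smul_eq_mul, dotProduct_comm v x]
        ring
      have hWnn := LCdot_self_nonneg (x - γ • v)
      have hXnn := LCdot_self_nonneg x
      have hVnn := LCdot_self_nonneg v
      have key : (α+B) * ((2/(α+B))*(x ⬝ᵥ x) + 2*(-γ/(α+B))*(x ⬝ᵥ v) + (v ⬝ᵥ v))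
          = (x ⬝ᵥ x) + ((x - γ • v) ⬝ᵥ (x - γ • v)) + ((α+B)-γ^2)*(v ⬝ᵥ v) := by
        rw [hW]; field_simp; ring
      have hrest : 0 ≤ ((α+B)-γ^2)*(v ⬝ᵥ v) :=
        mul_nonneg (by linarith) hVnn
      by_cases hx0 : x = 0
      · have hv0 : v ≠ 0 := by
          intro hv0
          apply hξ0
          rw [hξ, hx0, hv0]
          funext i; cases i <;> rfl
        have hVpos : 0 < v ⬝ᵥ v :=
          lt_of_le_of_ne hVnn (fun h => hv0 (dotProduct_self_eq_zero.mp h.symm))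
        have hX0 : x ⬝ᵥ x = 0 := by rw [hx0]; simp
        have hP0 : x ⬝ᵥ v = 0 := by rw [hx0]; simp
        have hWv : ((x - γ • v) ⬝ᵥ (x - γ • v)) = γ^2*(v ⬝ᵥ v) := by
          rw [hW, hX0, hP0]; ring
        have hq : 0 < (α+B) * ((2/(α+B))*(x ⬝ᵥ x) + 2*(-γ/(α+B))*(x ⬝ᵥ v) + (v ⬝ᵥ v)) := by
          rw [key, hWv, hX0]
          nlinarith
        nlinarith
      · have hXpos : 0 < x ⬝ᵥ x :=
          lt_of_le_of_ne hXnn (fun h => hx0 (dotProduct_self_eq_zero.mp h.symm))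
        have hq : 0 < (α+B) * ((2/(α+B))*(x ⬝ᵥ x) + 2*(-γ/(α+B))*(x ⬝ᵥ v) + (v ⬝ᵥ v)) := by
          rw [key]
          nlinarith
        nlinarith
  refine ⟨Q, LCkk α B γ, hQpd, hQsym, hκpos, ?_⟩
  intro H hH hlow hhigh ξ
  set x : Fin d → ℝ := ξ ∘ Sum.inl with hx
  set v : Fin d → ℝ := ξ ∘ Sum.inr with hv
  have hξ : ξ = Sum.elim x v := by funext i; cases i <;> rfl
  have hQv : Q *ᵥ ξ = Sum.elim ((2/(α+B)) • x + (-γ/(α+B)) • v) ((-γ/(α+B)) • x + v) := by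
    rw [hQ, fromBlocks_mulVec]
    simp [smul_mulVec, one_mulVec]
    rfl
  have hJQv : (Matrix.fromBlocks (0 : Matrix (Fin d) (Fin d) ℝ) 1 (-H) (-(γ • 1)) * Q) *ᵥ ξ
      = Sum.elim ((-γ/(α+B)) • x + v)
          (-(H *ᵥ ((2/(α+B)) • x + (-γ/(α+B)) • v)) + (-(γ • v) + -(γ • ((-γ/(α+B)) • x)))) := by
    rw [← mulVec_mulVec, hQv, fromBlocks_mulVec]
    simp [zero_mulVec, one_mulVec, neg_mulVec, smul_mulVec]
  have hsym : v ⬝ᵥ (H *ᵥ x) = x ⬝ᵥ (H *ᵥ v) := by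
    rw [dotProduct_mulVec, ← mulVec_transpose, hH.eq, dotProduct_comm]
  have e1 : ξ ⬝ᵥ ((Matrix.fromBlocks (0 : Matrix (Fin d) (Fin d) ℝ) 1 (-H) (-(γ • 1)) * Q) *ᵥ ξ)
      = (-γ/(α+B))*(x ⬝ᵥ x) + (1 - γ*(-γ/(α+B)))*(x ⬝ᵥ v) - (2/(α+B))*(x ⬝ᵥ (H *ᵥ v))
        - (-γ/(α+B))*(v ⬝ᵥ (H *ᵥ v)) - γ*(v ⬝ᵥ v) := by
    rw [hJQv]
    nth_rewrite 1 [hξ]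
    rw [sumElim_dotProduct_sumElim]
    simp only [mulVec_add, mulVec_smul, dotProduct_add, dotProduct_smul, dotProduct_neg,
      smul_eq_mul, dotProduct_comm v x, hsym]
    ring
  have e2 := hQform ξ
  rw [e1, e2]
  -- quadratic form expansions for the certificate vectors
  have qform : ∀ t : ℝ, (x + t • v) ⬝ᵥ (x + t • v)
      = (x ⬝ᵥ x) + 2*t*(x ⬝ᵥ v) + t^2*(v ⬝ᵥ v) := by
    intro t
    simp only [dotProduct_add, add_dotProduct, dotProduct_smul, smul_dotProduct,
      smul_eq_mul, dotProduct_comm v x]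
    ring
  have hform : ∀ t : ℝ, (x + t • v) ⬝ᵥ (H *ᵥ (x + t • v))
      = (x ⬝ᵥ (H *ᵥ x)) + 2*t*(x ⬝ᵥ (H *ᵥ v)) + t^2*(v ⬝ᵥ (H *ᵥ v)) := by
    intro t
    simp only [mulVec_add, mulVec_smul, dotProduct_add, add_dotProduct, dotProduct_smul,
      smul_dotProduct, smul_eq_mul, hsym]
    ring
  have F1 : 0 ≤ ((x ⬝ᵥ (H *ᵥ x)) + 2*(LCt α B γ (LCkk α B γ))*(x ⬝ᵥ (H *ᵥ v))
      + (LCt α B γ (LCkk α B γ))^2*(v ⬝ᵥ (H *ᵥ v)))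
      - α*((x ⬝ᵥ x) + 2*(LCt α B γ (LCkk α B γ))*(x ⬝ᵥ v)
        + (LCt α B γ (LCkk α B γ))^2*(v ⬝ᵥ v)) := by
    have := hlow (x + (LCt α B γ (LCkk α B γ)) • v)
    rw [qform, hform] at this
    linarith
  have F2 : 0 ≤ B*((x ⬝ᵥ x) + 2*(LCt' α B γ (LCkk α B γ))*(x ⬝ᵥ v)
        + (LCt' α B γ (LCkk α B γ))^2*(v ⬝ᵥ v))
      - ((x ⬝ᵥ (H *ᵥ x)) + 2*(LCt' α B γ (LCkk α B γ))*(x ⬝ᵥ (H *ᵥ v))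
        + (LCt' α B γ (LCkk α B γ))^2*(v ⬝ᵥ (H *ᵥ v))) := by
    have := hhigh (x + (LCt' α B γ (LCkk α B γ)) • v)
    rw [qform, hform] at this
    linarith
  have F3 := LCdot_self_nonneg v
  have KI := LC_key_identity α B γ (LCkk α B γ) (x ⬝ᵥ x) (x ⬝ᵥ v) (v ⬝ᵥ v)
    (x ⬝ᵥ (H *ᵥ x)) (x ⬝ᵥ (H *ᵥ v)) (v ⬝ᵥ (H *ᵥ v))
    (by linarith) (by linarith) (by linarith)
  nlinarith [mul_nonneg hlpos.le F1, mul_nonneg hlpos.le F2, mul_nonneg hDpos F3, KI]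


/-- existence of a distorted norm (a symmetric positive definite matrix `Q`)
and a rate `κ > 0` such that the Jacobian `J` of the kinetic Langevin drift satisfies
`⟨ξ, J Q ξ⟩ ≤ -κ ⟨ξ, Q ξ⟩` uniformly over Hessians `α·Id ≤ H ≤ β·Id`. -/
theorem langevin_contraction_matrix
    (d : ℕ) (hd : 1 ≤ d) (γ α β : ℝ)
    (hγ : 0 < γ) (hα : 0 < α) (hαβ : α < β)
    (hgap : Real.sqrt β - Real.sqrt α < γ) :
    ∃ (Q : Matrix (Fin d ⊕ Fin d) (Fin d ⊕ Fin d) ℝ) (κ : ℝ),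
      Q.PosDef ∧ Q.IsSymm ∧ 0 < κ ∧
      ∀ H : Matrix (Fin d) (Fin d) ℝ, H.IsSymm →
        (H - α • (1 : Matrix (Fin d) (Fin d) ℝ)).PosSemidef →
        (β • (1 : Matrix (Fin d) (Fin d) ℝ) - H).PosSemidef →
        ∀ ξ : Fin d ⊕ Fin d → ℝ,
          ξ ⬝ᵥ ((Matrix.fromBlocks (0 : Matrix (Fin d) (Fin d) ℝ)
              (1 : Matrix (Fin d) (Fin d) ℝ) (-H)
              (-(γ • (1 : Matrix (Fin d) (Fin d) ℝ))) * Q) *ᵥ ξ)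
            ≤ -κ * (ξ ⬝ᵥ (Q *ᵥ ξ)) := by
  have hlow_of : ∀ H : Matrix (Fin d) (Fin d) ℝ,
      (H - α • (1 : Matrix (Fin d) (Fin d) ℝ)).PosSemidef →
      ∀ w : Fin d → ℝ, α*(w ⬝ᵥ w) ≤ w ⬝ᵥ (H *ᵥ w) := by
    intro H hP w
    have h := hP.dotProduct_mulVec_nonneg w
    have hstar : star w = w := by funext i; simp
    rw [hstar, sub_mulVec, smul_mulVec, one_mulVec, dotProduct_sub,
      dotProduct_smul, smul_eq_mul] at h
    linarith
  have hhigh_of : ∀ H : Matrix (Fin d) (Fin d) ℝ,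
      (β • (1 : Matrix (Fin d) (Fin d) ℝ) - H).PosSemidef →
      ∀ w : Fin d → ℝ, w ⬝ᵥ (H *ᵥ w) ≤ β*(w ⬝ᵥ w) := by
    intro H hP w
    have h := hP.dotProduct_mulVec_nonneg w
    have hstar : star w = w := by funext i; simp
    rw [hstar, sub_mulVec, smul_mulVec, one_mulVec, dotProduct_sub,
      dotProduct_smul, smul_eq_mul] at h
    linarith
  rcases le_or_gt (γ^2) (α+β) with hc | hc
  · -- moderate friction: use B = β
    have hg : 0 < γ^2*(2*(α+β)-γ^2) - (β-α)^2 := by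
      set p := Real.sqrt α with hp
      set q := Real.sqrt β with hq
      have hp2 : p^2 = α := Real.sq_sqrt hα.le
      have hq2 : q^2 = β := Real.sq_sqrt (hα.trans hαβ).le
      have hppos : 0 < p := Real.sqrt_pos.mpr hα
      have hpq : p < q := Real.sqrt_lt_sqrt hα.le hαβ
      have h1 : 0 < γ^2 - (q-p)^2 := by nlinarith
      have h2 : 0 < (p+q)^2 - γ^2 := by nlinarith
      nlinarith [mul_pos h1 h2]
    obtain ⟨Q, κ, h1, h2, h3, h4⟩ := LC_aux d γ α β hγ hα hαβ hc hg
    exact ⟨Q, κ, h1, h2, h3, fun H hH hP1 hP2 =>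
      h4 H hH (hlow_of H hP1) (hhigh_of H hP2)⟩
  · -- large friction: use B = γ^2 - α
    have hαB : α < γ^2 - α := by linarith
    have hS : γ^2 ≤ α + (γ^2 - α) := by linarith
    have hg : 0 < γ^2*(2*(α+(γ^2-α))-γ^2) - ((γ^2-α)-α)^2 := by nlinarith
    obtain ⟨Q, κ, h1, h2, h3, h4⟩ := LC_aux d γ α (γ^2-α) hγ hα hαB hS hg
    refine ⟨Q, κ, h1, h2, h3, fun H hH hP1 hP2 => h4 H hH (hlow_of H hP1) ?_⟩
    intro w
    have := hhigh_of H hP2 w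
    have hw := LCdot_self_nonneg w
    nlinarith
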